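/- Let Φ : [0,∞) → [0,∞) be convex, strictly increasing and continuous with Φ(0) = 0 and Φ(A·B) ≤ Φ(A)·Φ(B) for all A > 0, B > 0. Let n ≥ 2 be an integer and let y₁,…,yₙ be real numbers with Σ_{i=1}^n yᵢ = 0. Then Φ(|yₙ|) ≤ (Φ(n−1)/(n−1)) · Σ_{i=1}^{n−1} Φ(|yᵢ|). -/

import Mathlib

/-- Key lemma of Theorem 5: bound on `Φ(|yₙ|)` for a zero-sum sequence, for a
convex, submultiplicative modulus `Φ`. -/
theorem stmt_5 (Φ : ℝ → ℝ)
    (hΦ0 : Φ 0 = 0)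
    (hΦnonneg : ∀ x ∈ Set.Ici (0:ℝ), 0 ≤ Φ x)
    (hΦconv : ConvexOn ℝ (Set.Ici 0) Φ)
    (hΦmono : StrictMonoOn Φ (Set.Ici 0))
    (hΦcont : ContinuousOn Φ (Set.Ici 0))
    (hΦsub : ∀ A B : ℝ, 0 < A → 0 < B → Φ (A * B) ≤ Φ A * Φ B)
    (n : ℕ) (hn : 2 ≤ n) (y : ℕ → ℝ)
    (hzero : ∑ i ∈ Finset.Icc 1 n, y i = 0) :
    Φ (|y n|) ≤ (Φ ((n:ℝ) - 1) / ((n:ℝ) - 1)) *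
      ∑ i ∈ Finset.Icc 1 (n - 1), Φ (|y i|) := by
  set S := Finset.Icc 1 (n - 1) with hS
  set c : ℝ := (n : ℝ) - 1 with hc
  have hc1 : (1:ℝ) ≤ c := by
    have : (2:ℝ) ≤ (n:ℝ) := by exact_mod_cast hn
    simp [hc]; linarith
  have hcpos : 0 < c := lt_of_lt_of_le one_pos hc1
  have hcard : (S.card : ℝ) = c := by
    have : S.card = n - 1 := by simp [hS]
    rw [this, hc]
    have h1n : 1 ≤ n := by omega
    push_cast [Nat.cast_sub h1n]
    ring
  -- split the sum
  have hsplit : ∑ i ∈ Finset.Icc 1 n, y i = (∑ i ∈ S, y i) + y n := by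
    obtain ⟨m, rfl⟩ : ∃ m, n = m + 1 := ⟨n - 1, by omega⟩
    rw [Finset.sum_Icc_succ_top (by omega)]
    simp [hS]
  have hyn : y n = -∑ i ∈ S, y i := by linarith [hsplit.symm.trans hzero]
  have habs : |y n| ≤ ∑ i ∈ S, |y i| := by
    rw [hyn, abs_neg]
    exact Finset.abs_sum_le_sum_abs _ _
  have hsumnn : 0 ≤ ∑ i ∈ S, |y i| := Finset.sum_nonneg fun i _ => abs_nonneg _
  have hΦn_nn : 0 ≤ Φ c := hΦnonneg c hcpos.le
  have hRHSnn : 0 ≤ ∑ i ∈ S, Φ (|y i|) :=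
    Finset.sum_nonneg fun i _ => hΦnonneg _ (Set.mem_Ici.2 (abs_nonneg _))
  have hmono' : MonotoneOn Φ (Set.Ici 0) := hΦmono.monotoneOn
  have h1 : Φ (|y n|) ≤ Φ (∑ i ∈ S, |y i|) :=
    hmono' (Set.mem_Ici.2 (abs_nonneg _)) (Set.mem_Ici.2 hsumnn) habs
  set T := ∑ i ∈ S, |y i| with hT
  rcases eq_or_lt_of_le hsumnn with hT0 | hTpos
  · -- T = 0, so y n = 0
    have : |y n| = 0 := le_antisymm (by linarith [habs]) (abs_nonneg _)
    rw [this, hΦ0]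
    have : 0 ≤ Φ c / c := div_nonneg hΦn_nn hcpos.le
    exact mul_nonneg this hRHSnn
  · -- T > 0
    have hTe : T = c * (T / c) := by field_simp
    have hstep : Φ T ≤ Φ c * Φ (T / c) := by
      calc Φ T = Φ (c * (T / c)) := by rw [← hTe]
        _ ≤ Φ c * Φ (T / c) := hΦsub _ _ hcpos (div_pos hTpos hcpos)
    -- Jensen
    have hScard : S.card = n - 1 := by simp [hS]
    have hw : ∑ _i ∈ S, (1/c) = 1 := by
      rw [Finset.sum_const, nsmul_eq_mul, hcard]
      field_simp
    have hjensen : Φ (∑ i ∈ S, (1/c) • |y i|) ≤ ∑ i ∈ S, (1/c) • Φ (|y i|) :=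
      hΦconv.map_sum_le (fun i _ => by positivity) hw (fun i _ => Set.mem_Ici.2 (abs_nonneg _))
    have hTc : (∑ i ∈ S, (1/c) • |y i|) = T / c := by
      simp only [smul_eq_mul, ← Finset.mul_sum, hT]
      ring
    have hjensen' : Φ (T / c) ≤ (1/c) * ∑ i ∈ S, Φ (|y i|) := by
      rw [← hTc]
      calc Φ (∑ i ∈ S, (1/c) • |y i|) ≤ ∑ i ∈ S, (1/c) • Φ (|y i|) := hjensen
        _ = (1/c) * ∑ i ∈ S, Φ (|y i|) := by
            simp [Finset.mul_sum]
    calc Φ (|y n|) ≤ Φ T := h1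
      _ ≤ Φ c * Φ (T / c) := hstep
      _ ≤ Φ c * ((1/c) * ∑ i ∈ S, Φ (|y i|)) :=
          mul_le_mul_of_nonneg_left hjensen' hΦn_nn
      _ = (Φ c / c) * ∑ i ∈ S, Φ (|y i|) := by ring
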